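/- Fix integers d ≥ 1, C ≥ 2, m ≥ 2, orthonormal vectors s_1,…,s_C ∈ ℝ^d, and α ∈ (0,1]. Then for every ε > 0 there exists a matrix W ∈ ℝ^{C×d} such that for ALL vectors b_1,…,b_{m−1} ∈ ℝ^d orthogonal to each of s_1,…,s_C, (1/C) Σ_{y=1}^C −log σ_y( W ( α s_y + ((1−α)/(m−1)) Σ_{j=1}^{m−1} b_j ) ) < ε. (A witness is W = μ D for μ large, where D is the matrix with k-th row s_k − (1/C) Σ_{k'} s_{k'}; the loss then equals log(1 + (C−1)exp(−αμ)).) Hence, in contrast to hard attention, the fixed-focus soft-attention loss can be driven arbitrarily close to 0 for any focus level α > 0. -/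

import Mathlib

open scoped RealInnerProductSpace BigOperators

/-- Softmax of a finite family of reals. -/
noncomputable def softmax {ι : Type*} [Fintype ι] (z : ι → ℝ) (k : ι) : ℝ :=
  Real.exp (z k) / ∑ l, Real.exp (z l)

/-- for any focus level `α > 0`, the fixed-focus soft-attention loss can be
driven arbitrarily small, uniformly over all background segments orthogonal to the
foreground directions. -/
theorem fixed_focus_soft_attention_loss_arbitrarily_small
    (d C m : ℕ) (hd : 1 ≤ d) (hC : 2 ≤ C) (hm : 2 ≤ m)
    (s : Fin C → EuclideanSpace ℝ (Fin d)) (hs : Orthonormal ℝ s)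
    (α : ℝ) (hα : α ∈ Set.Ioc (0 : ℝ) 1) :
    ∀ ε > 0, ∃ W : Fin C → EuclideanSpace ℝ (Fin d),
      ∀ b : Fin (m - 1) → EuclideanSpace ℝ (Fin d),
        (∀ j k, ⟪b j, s k⟫ = 0) →
        (C : ℝ)⁻¹ * ∑ y : Fin C,
          -Real.log (softmax (fun i =>
            ⟪W i, α • s y + ((1 - α) / ((m : ℝ) - 1)) • ∑ j, b j⟫) y) < ε := by
  intro ε hε
  have hα0 : (0:ℝ) < α := hα.1
  have ht : (0:ℝ) < Real.exp ε - 1 := by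
    have := Real.add_one_lt_exp (x := ε) (ne_of_gt hε)
    linarith
  set t : ℝ := Real.exp ε - 1 with htdef
  have hCpos : (0:ℝ) < C := by positivity
  have hC1 : (0:ℝ) < (C:ℝ) - 1 := by
    have : (2:ℝ) ≤ C := by exact_mod_cast hC
    linarith
  set A : ℝ := ((C:ℝ) - 1) / t with hAdef
  have hA : 0 < A := div_pos hC1 ht
  set μ : ℝ := (Real.log A + 1) / α with hμdef
  have hμα : μ * α = Real.log A + 1 := by
    rw [hμdef]
    field_simp [ne_of_gt hα0]
  refine ⟨fun i => μ • s i, ?_⟩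
  intro b hb
  -- inner product computation
  have hz : ∀ i y : Fin C,
      ⟪(μ • s i : EuclideanSpace ℝ (Fin d)),
        α • s y + ((1 - α) / ((m : ℝ) - 1)) • ∑ j, b j⟫ =
      if i = y then μ * α else 0 := by
    intro i y
    have h1 : ⟪s i, s y⟫ = if i = y then (1:ℝ) else 0 := orthonormal_iff_ite.mp hs i y
    have h2 : ∀ j, ⟪s i, b j⟫ = (0:ℝ) := fun j => by
      rw [real_inner_comm]; exact hb j i
    rw [real_inner_smul_left, inner_add_right, real_inner_smul_right,
      real_inner_smul_right, inner_sum]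
    simp only [h1, h2, Finset.sum_const_zero, mul_zero, add_zero]
    split <;> ring
  -- the per-label loss
  have key : ∀ y : Fin C,
      -Real.log (softmax (fun i =>
        ⟪((fun i => μ • s i) i : EuclideanSpace ℝ (Fin d)),
          α • s y + ((1 - α) / ((m : ℝ) - 1)) • ∑ j, b j⟫) y) =
      Real.log (Real.exp (μ * α) + ((C:ℝ) - 1)) - μ * α := by
    intro y
    have hsum : (∑ l : Fin C, Real.exp (if l = y then μ * α else 0)) =
        Real.exp (μ * α) + ((C:ℝ) - 1) := by
      rw [← Finset.add_sum_erase _ _ (Finset.mem_univ y), if_pos rfl]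
      congr 1
      have h1 : ∀ x ∈ Finset.univ.erase y, Real.exp (if x = y then μ * α else 0) = 1 :=
        fun x hx => by simp [Finset.ne_of_mem_erase hx]
      rw [Finset.sum_congr rfl h1, Finset.sum_const, Finset.card_erase_of_mem (Finset.mem_univ y),
        Finset.card_univ, Fintype.card_fin, nsmul_eq_mul, mul_one,
        Nat.cast_sub (le_trans one_le_two hC)]
      norm_num
    simp only [softmax, hz]
    rw [hsum]
    simp only [if_true]
    have hden : (0:ℝ) < Real.exp (μ * α) + ((C:ℝ) - 1) := by positivity
    rw [Real.log_div (Real.exp_ne_zero _) (ne_of_gt hden), Real.log_exp]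
    ring
  simp only [key]
  rw [Finset.sum_const, Finset.card_univ, Fintype.card_fin, nsmul_eq_mul]
  rw [← mul_assoc, inv_mul_cancel₀ (ne_of_gt hCpos), one_mul]
  -- final inequality
  have hexp : Real.exp (μ * α) = A * Real.exp 1 := by
    rw [hμα, Real.exp_add, Real.exp_log hA]
  have hAe : ((C:ℝ) - 1) < Real.exp (μ * α) * t := by
    rw [hexp]
    have : A * t = (C:ℝ) - 1 := by
      rw [hAdef]
      field_simp [ne_of_gt ht]
    calc ((C:ℝ) - 1) = A * t := this.symm
      _ < A * Real.exp 1 * t := by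
          have h1 : (1:ℝ) < Real.exp 1 := by
            have := Real.add_one_lt_exp (x := (1:ℝ)) one_ne_zero
            linarith
          have := mul_lt_mul_of_pos_right
            (mul_lt_mul_of_pos_left h1 hA) ht
          calc A * t = A * 1 * t := by ring
            _ < A * Real.exp 1 * t := this
  have hden : (0:ℝ) < Real.exp (μ * α) + ((C:ℝ) - 1) := by positivity
  rw [sub_lt_iff_lt_add, ← Real.log_exp (ε + μ * α)]
  apply Real.log_lt_log hden
  rw [Real.exp_add]
  have : Real.exp ε = 1 + t := by simp [htdef]
  rw [this]
  nlinarith [Real.exp_pos (μ * α)]
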